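/- Let n ≥ 2, p > q ≥ 1, k > 0 and c ≤ -2√(p-q). Then there exists m > 0 with c ≤ -m - (p-q)/m, and for any such m and any X ∈ (0,1), the quantity G(X) = (X-1)[m² + mc - kmnX^{n-1} + (X^p - X^q)/(X-1)] is strictly positive. -/

import Mathlib

open Real Set

theorem flow_pos_small_c (n p q k c : ℝ) (hn : 2 ≤ n) (hq : 1 ≤ q) (hpq : q < p)
    (hk : 0 < k) (hc : c ≤ -2 * Real.sqrt (p - q)) :
    (∃ m : ℝ, 0 < m ∧ c ≤ -m - (p - q) / m) ∧
    (∀ m : ℝ, 0 < m → c ≤ -m - (p - q) / m →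
      ∀ X ∈ Set.Ioo (0 : ℝ) 1,
        0 < (X - 1) *
          (m ^ 2 + m * c - k * m * n * X ^ (n - 1) + (X ^ p - X ^ q) / (X - 1))) := by
  have hpq0 : (0 : ℝ) < p - q := by linarith
  constructor
  · refine ⟨Real.sqrt (p - q), Real.sqrt_pos.mpr hpq0, ?_⟩
    have hs : Real.sqrt (p - q) * Real.sqrt (p - q) = p - q :=
      Real.mul_self_sqrt hpq0.le
    have hspos : 0 < Real.sqrt (p - q) := Real.sqrt_pos.mpr hpq0
    have : (p - q) / Real.sqrt (p - q) = Real.sqrt (p - q) := by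
      field_simp [hs]
      rw [sq, hs]
    rw [this]
    linarith
  · rintro m hm hcm X ⟨hX0, hX1⟩
    have hXm1 : X - 1 < 0 := by linarith
    -- key inequality : (p-q)(X-1) ≤ X^p - X^q
    have hXq : X ^ q ≤ X ^ (1 : ℝ) :=
      Real.rpow_le_rpow_of_exponent_ge hX0 hX1.le hq
    have hXr1 : X ^ (p - q) ≤ 1 :=
      Real.rpow_le_one hX0.le hX1.le hpq0.le
    have hbern : 1 + (1 + (p - q)) * (X - 1) ≤ X ^ (1 + (p - q)) := by
      have := one_add_mul_self_le_rpow_one_add (s := X - 1) (by linarith)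
        (p := 1 + (p - q)) (by linarith)
      simpa using this
    have hsplit : X ^ (1 + (p - q)) = X * X ^ (p - q) := by
      rw [Real.rpow_add hX0, Real.rpow_one]
    have h1 : X ^ q * (1 - X ^ (p - q)) ≤ X * (1 - X ^ (p - q)) := by
      apply mul_le_mul_of_nonneg_right _ (by linarith)
      simpa using hXq
    have h2 : X * (1 - X ^ (p - q)) ≤ (p - q) * (1 - X) := by
      have := hbern
      rw [hsplit] at this
      nlinarith
    have hkey : (p - q) * (X - 1) ≤ X ^ p - X ^ q := by
      have hpow : X ^ p = X ^ q * X ^ (p - q) := by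
        rw [← Real.rpow_add hX0]; ring_nf
      have : X ^ q * (1 - X ^ (p - q)) ≤ (p - q) * (1 - X) := le_trans h1 h2
      nlinarith
    have hdiv : (X ^ p - X ^ q) / (X - 1) ≤ p - q := by
      rw [div_le_iff_of_neg hXm1]
      linarith
    have hmc : m ^ 2 + m * c ≤ -(p - q) := by
      have := mul_le_mul_of_nonneg_left hcm hm.le
      have h' : m * c ≤ m * (-m - (p - q) / m) := this
      have : m * (-m - (p - q) / m) = -m ^ 2 - (p - q) := by
        field_simp
      nlinarith
    have hXn : 0 < X ^ (n - 1) := Real.rpow_pos_of_pos hX0 _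
    have hterm : 0 < k * m * n * X ^ (n - 1) := by positivity
    have hE : m ^ 2 + m * c - k * m * n * X ^ (n - 1) + (X ^ p - X ^ q) / (X - 1) < 0 := by
      linarith
    exact mul_pos_of_neg_of_neg hXm1 hE
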